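/- For every integer k ≥ 0, every real number c, and every (x,y) ∈ ℝ², the secondary shift of coordinates expands B(0,k) as: B(0,k)(x, y+c) = Σ_{i=0}^{k} C(k,i)·c^i·B(0,k−i)(x,y) + Σ_{i=1}^{k} C(k,i−1)·c^i·( ((k−i+1)/(k−i+2))·B(0,k−i)(x,y) − A(0,k−i)(x,y) ) − c^{k+1}·A(0,−1)(x,y), where C(k,i) denotes the binomial coefficient and A(0,−1) is the constant vector field (0,−1). -/

import Mathlib

/-- Monomial `x^a * y^b` for integer exponents, zero if an exponent is negative. -/
noncomputable def M (a b : ℤ) : ℝ × ℝ → ℝ :=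
  fun p => if 0 ≤ a ∧ 0 ≤ b then p.1 ^ a.toNat * p.2 ^ b.toNat else 0

/-- The vector field `A(l,k)`. -/
noncomputable def A (l k : ℤ) : ℝ × ℝ → ℝ × ℝ :=
  fun p => (((k : ℝ) - (l : ℝ) + 1) / ((k : ℝ) + 2) * M (l + 1) (k - l) p,
            -(((l : ℝ) + 1) / ((k : ℝ) + 2)) * M l (k - l + 1) p)

/-- The vector field `B(l,k)`. -/
noncomputable def B (l k : ℤ) : ℝ × ℝ → ℝ × ℝ :=
  fun p => (M (l + 1) (k - l) p, M l (k - l + 1) p)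

/-- The scalar monomial function `Z(l,k)`. -/
noncomputable def Z (l k : ℤ) : ℝ × ℝ → ℝ := M l (k - l)

/-- Lie bracket of planar vector fields: `[X,Y](p) = DY(p)(X(p)) - DX(p)(Y(p))`. -/
noncomputable def lieBracket (X Y : ℝ × ℝ → ℝ × ℝ) : ℝ × ℝ → ℝ × ℝ :=
  fun p => fderiv ℝ Y p (X p) - fderiv ℝ X p (Y p)

/-- Secondary shift of coordinates expansion of `B(0,k)`. -/
theorem stmt12 (k : ℕ) (c x y : ℝ) :
    B 0 (k : ℤ) (x, y + c) =
      (∑ i ∈ Finset.range (k + 1),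
        ((k.choose i : ℝ) * c ^ i) • B 0 ((k : ℤ) - (i : ℤ)) (x, y))
      + (∑ i ∈ Finset.Icc 1 k,
        ((k.choose (i - 1) : ℝ) * c ^ i) •
          ((((k : ℝ) - (i : ℝ) + 1) / ((k : ℝ) - (i : ℝ) + 2)) •
              B 0 ((k : ℤ) - (i : ℤ)) (x, y)
            - A 0 ((k : ℤ) - (i : ℤ)) (x, y)))
      - c ^ (k + 1) • A 0 (-1) (x, y) := by
  have hBv : ∀ i : ℕ, i ≤ k → B 0 ((k:ℤ) - i) (x, y)
      = ((x * y ^ (k - i), y ^ (k - i + 1)) : ℝ × ℝ) := by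
    intro i hi
    have h0 : (0:ℤ) ≤ (k:ℤ) - i := by omega
    have ht : ((k:ℤ) - i).toNat = k - i := by omega
    have ht2 : ((k:ℤ) - i + 1).toNat = k - i + 1 := by omega
    simp [B, M, h0, ht, ht2, le_trans h0 (by omega : (k:ℤ) - i ≤ (k:ℤ) - i + 1)]
    intro h
    exact absurd h (by omega)
  have hAv : ∀ i : ℕ, i ≤ k → A 0 ((k:ℤ) - i) (x, y)
      = ((((k:ℝ) - i + 1) / ((k:ℝ) - i + 2) * (x * y ^ (k - i)),
          -(1 / ((k:ℝ) - i + 2)) * y ^ (k - i + 1)) : ℝ × ℝ) := by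
    intro i hi
    have h0 : (0:ℤ) ≤ (k:ℤ) - i := by omega
    have ht : ((k:ℤ) - i).toNat = k - i := by omega
    have ht2 : ((k:ℤ) - i + 1).toNat = k - i + 1 := by omega
    have h1 : (0:ℤ) ≤ (k:ℤ) - i + 1 := by omega
    simp [A, M, h0, h1, ht, ht2]
    intro h
    exact absurd h (by omega)
  have hden : ∀ i : ℕ, i ≤ k → ((k:ℝ) - i + 2) ≠ 0 := by
    intro i hi
    have : (i:ℝ) ≤ (k:ℝ) := by exact_mod_cast hi
    nlinarith
  have hcomb : ∀ i : ℕ, i ≤ k →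
      (((k:ℝ) - i + 1) / ((k:ℝ) - i + 2)) • B 0 ((k:ℤ) - i) (x, y)
        - A 0 ((k:ℤ) - i) (x, y) = ((0, y ^ (k - i + 1)) : ℝ × ℝ) := by
    intro i hi
    rw [hBv i hi, hAv i hi]
    have h := hden i hi
    simp only [Prod.smul_mk, Prod.mk_sub_mk, smul_eq_mul, Prod.mk.injEq]
    constructor
    · ring
    · field_simp
      ring
  have hL : B 0 (k:ℤ) (x, y + c) = ((x * (c + y) ^ k, (c + y) ^ (k + 1)) : ℝ × ℝ) := by
    simp [B, M, add_comm y c]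
    intro h
    exact absurd h (by omega)
  rw [hL]
  have e1 : ∑ i ∈ Finset.range (k + 1),
        ((k.choose i : ℝ) * c ^ i) • B 0 ((k : ℤ) - (i : ℤ)) (x, y)
      = ∑ i ∈ Finset.range (k + 1),
        ((k.choose i : ℝ) * c ^ i) • ((x * y ^ (k - i), y ^ (k - i + 1)) : ℝ × ℝ) :=
    Finset.sum_congr rfl fun i hi => by rw [hBv i (by simp at hi; omega)]
  have e2 : ∑ i ∈ Finset.Icc 1 k,
        ((k.choose (i - 1) : ℝ) * c ^ i) •
          ((((k : ℝ) - (i : ℝ) + 1) / ((k : ℝ) - (i : ℝ) + 2)) •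
              B 0 ((k : ℤ) - (i : ℤ)) (x, y) - A 0 ((k : ℤ) - (i : ℤ)) (x, y))
      = ∑ i ∈ Finset.Icc 1 k,
        ((k.choose (i - 1) : ℝ) * c ^ i) • ((0, y ^ (k - i + 1)) : ℝ × ℝ) :=
    Finset.sum_congr rfl fun i hi => by rw [hcomb i (by simp at hi; omega)]
  rw [e1, e2]
  have hA1 : A 0 (-1) (x, y) = ((0, -1) : ℝ × ℝ) := by
    norm_num [A, M]
  rw [hA1]
  rw [Prod.ext_iff]
  simp only [Prod.fst_sum, Prod.snd_sum, Prod.smul_mk, smul_eq_mul, Prod.fst_add,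
    Prod.snd_add, Prod.fst_sub, Prod.snd_sub, mul_zero, Finset.sum_const_zero,
    mul_neg, mul_one]
  constructor
  · rw [add_pow]
    rw [Finset.mul_sum]
    simp only [add_zero, sub_zero, neg_zero]
    apply Finset.sum_congr rfl
    intro i hi
    ring
  · -- (c+y)^(k+1) = S1 + S2 - (-c^(k+1))
    have hS2 : ∑ i ∈ Finset.Icc 1 k, (k.choose (i-1) : ℝ) * c ^ i * y ^ (k - i + 1)
        = ∑ j ∈ Finset.range k, (k.choose j : ℝ) * c ^ (j+1) * y ^ (k - j) := by
      rw [← Finset.Ico_add_one_right_eq_Icc, Finset.sum_Ico_eq_sum_range]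
      apply Finset.sum_congr (by congr 1)
      intro j hj
      simp only [Finset.mem_range] at hj
      have h1 : 1 + j - 1 = j := by omega
      have h2 : k - (1 + j) + 1 = k - j := by omega
      rw [h1, h2]
      ring_nf
    rw [hS2]
    have hexp : (c + y) ^ (k + 1) = y * (c + y) ^ k + c * (c + y) ^ k := by ring
    rw [hexp, add_pow, Finset.mul_sum, Finset.mul_sum]
    have hy : ∀ i ∈ Finset.range (k+1),
        y * (c ^ i * y ^ (k - i) * (k.choose i : ℝ))
        = (k.choose i : ℝ) * c ^ i * y ^ (k - i + 1) := by
      intro i hi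
      rw [pow_succ]
      ring
    rw [Finset.sum_congr rfl hy]
    have hc : ∀ i ∈ Finset.range (k+1),
        c * (c ^ i * y ^ (k - i) * (k.choose i : ℝ))
        = (k.choose i : ℝ) * c ^ (i+1) * y ^ (k - i) := by
      intro i hi
      rw [pow_succ]
      ring
    rw [Finset.sum_congr rfl hc,
      Finset.sum_range_succ (fun i => (k.choose i : ℝ) * c ^ (i + 1) * y ^ (k - i)) k]
    simp only [Nat.choose_self, Nat.cast_one, one_mul, Nat.sub_self, pow_zero, mul_one]
    ring
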